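/- Let r ≥ 2 and let a_1, …, a_r ≥ 1 be integers. Let H = {z ∈ ℤ^r : Σ_{i=1}^r a_i z_i = 0}. Then H is a free ℤ-module of rank r−1, and for every ℤ-basis (f_1, …, f_{r−1}) of H, the determinant of the Gram matrix (⟨f_i, f_j⟩)_{1≤i,j≤r−1} (Euclidean inner products in ℝ^r) equals (Σ_{i=1}^r a_i²) / gcd(a_1,…,a_r)². Equivalently, the (r−1)-dimensional Euclidean volume of the fundamental parallelotope Σ_{j=1}^{r−1}[0,1]·f_j is √(Σ_{i=1}^r a_i²) / gcd(a_1,…,a_r). -/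

import Mathlib

open Finset

noncomputable abbrev phi {r : ℕ} (u : Fin r → ℤ) : (Fin r → ℤ) →ₗ[ℤ] ℤ :=
  Fintype.linearCombination ℤ u

lemma phi_apply {r : ℕ} (u : Fin r → ℤ) (z : Fin r → ℤ) : phi u z = ∑ i, z i * u i := by
  simp [Fintype.linearCombination_apply, smul_eq_mul]

section core
variable {r : ℕ} (u v : Fin r → ℤ) (hv : phi u v = 1)

include hv in
lemma sub_smul_mem (z : Fin r → ℤ) : z - phi u z • v ∈ LinearMap.ker (phi u) := by
  rw [LinearMap.mem_ker, map_sub, map_smul, hv, smul_eq_mul, mul_one, sub_self]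

/-- splitting equiv -/
noncomputable def esplit : (Fin r → ℤ) ≃ₗ[ℤ] (LinearMap.ker (phi u)) × ℤ where
  toFun z := (⟨z - phi u z • v, sub_smul_mem u v hv z⟩, phi u z)
  invFun p := (p.1 : Fin r → ℤ) + p.2 • v
  map_add' z w := by
    refine Prod.ext (Subtype.ext ?_) ?_
    · show z + w - phi u (z + w) • v = (z - phi u z • v) + (w - phi u w • v)
      rw [map_add, add_smul]; abel
    · exact map_add _ z w
  map_smul' m z := by
    refine Prod.ext (Subtype.ext ?_) ?_
    · show m • z - phi u (m • z) • v = m • (z - phi u z • v)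
      rw [map_smul, smul_sub, smul_eq_mul, mul_smul]
    · exact map_smul _ m z
  left_inv z := by simp
  right_inv p := by
    obtain ⟨⟨h, hh⟩, n⟩ := p
    have h0 : phi u h = 0 := hh
    have hphi : phi u (h + n • v) = n := by
      rw [map_add, map_smul, h0, hv, smul_eq_mul, mul_one, zero_add]
    refine Prod.ext (Subtype.ext ?_) ?_
    · show h + n • v - phi u (h + n • v) • v = h
      rw [hphi, add_sub_cancel_right]
    · exact hphi

lemma esplit_symm_apply (h : LinearMap.ker (phi u)) (n : ℤ) :
    (esplit u v hv).symm (h, n) = (h : Fin r → ℤ) + n • v := rfl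

include hv in
lemma finrank_ker (hr : 1 ≤ r) : Module.finrank ℤ (LinearMap.ker (phi u)) = r - 1 := by
  have h1 := (esplit u v hv).finrank_eq
  rw [Module.finrank_prod, Module.finrank_self, Module.finrank_pi] at h1
  simp at h1
  omega
end core

section basis
variable {r : ℕ} (u v : Fin r → ℤ) (hv : phi u v = 1)
  (b : Module.Basis (Fin (r-1)) ℤ (LinearMap.ker (phi u)))

noncomputable def Bfull : Module.Basis (Fin (r-1) ⊕ Unit) ℤ (Fin r → ℤ) :=
  (b.prod (Module.Basis.singleton Unit ℤ)).map (esplit u v hv).symm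

lemma Bfull_inl (i : Fin (r-1)) : Bfull u v hv b (Sum.inl i) = (b i : Fin r → ℤ) := by
  simp [Bfull, esplit_symm_apply]

lemma Bfull_inr (t : Unit) : Bfull u v hv b (Sum.inr t) = v := by
  simp [Bfull, esplit_symm_apply]
end basis


noncomputable def eps {r : ℕ} (hr : 1 ≤ r) : (Fin (r-1) ⊕ Unit) ≃ Fin r :=
  ((Equiv.refl (Fin (r-1))).sumCongr (Equiv.ofUnique Unit (Fin 1))).trans
    (finSumFinEquiv.trans (finCongr (by omega)))

section gram
variable {r : ℕ} (u v : Fin r → ℤ) (hv : phi u v = 1)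
  (b : Module.Basis (Fin (r-1)) ℤ (LinearMap.ker (phi u)))

include hv in
lemma gram_det (hs : (∑ i, u i * u i) ≠ 0) :
    (Matrix.of fun i j : Fin (r-1) =>
      ∑ k, (b i : Fin r → ℤ) k * (b j : Fin r → ℤ) k).det = ∑ i, u i * u i := by
  have hr : 1 ≤ r := by
    by_contra h
    interval_cases r
    · rw [phi_apply] at hv; simp at hv
  set ε := eps (r := r) hr with hε
  set B := Bfull u v hv b with hB
  set s : ℤ := ∑ i, u i * u i with hsdef
  have hphiu : phi u u = s := phi_apply u u
  -- decomposition of u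
  set yH : LinearMap.ker (phi u) := ⟨u - phi u u • v, sub_smul_mem u v hv u⟩ with hy
  set c2 : Fin (r-1) → ℤ := fun j => b.repr yH j with hc2
  have hu_decomp : u = (∑ j, c2 j • (b j : Fin r → ℤ)) + s • v := by
    have h1 : (∑ j, c2 j • b j) = yH := b.sum_repr yH
    have h2 : ((∑ j, c2 j • b j : LinearMap.ker (phi u)) : Fin r → ℤ)
        = ∑ j, c2 j • (b j : Fin r → ℤ) := by
      push_cast [Submodule.coe_sum]
      rfl
    rw [h1] at h2
    have h3 : (yH : Fin r → ℤ) = u - s • v := by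
      show u - phi u u • v = u - s • v
      rw [hphiu]
    rw [← h2, h3]
    abel
  -- matrices
  set W : (Fin (r-1) ⊕ Unit) → Fin r → ℤ :=
    Sum.elim (fun i => (b i : Fin r → ℤ)) (fun _ => u) with hW
  set M : Matrix (Fin (r-1) ⊕ Unit) (Fin (r-1) ⊕ Unit) ℤ :=
    Matrix.of fun p q => B p (ε q) with hM
  set A : Matrix (Fin (r-1) ⊕ Unit) (Fin (r-1) ⊕ Unit) ℤ :=
    Matrix.of fun p q => W p (ε q) with hA
  set C : Matrix (Fin (r-1) ⊕ Unit) (Fin (r-1) ⊕ Unit) ℤ :=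
    Matrix.fromBlocks 1 0 (Matrix.of fun _ j => c2 j) (Matrix.of fun _ _ => s) with hC
  have hACM : A = C * M := by
    ext p q
    cases p with
    | inl i =>
      simp [hA, hC, hM, hB, Matrix.mul_apply, Fintype.sum_sum_type, Matrix.fromBlocks,
        Matrix.one_apply, Finset.sum_ite_eq, hW, Bfull_inl]
    | inr t =>
      simp only [hA, hC, hM, hB, Matrix.mul_apply, Fintype.sum_sum_type, Matrix.fromBlocks,
        Matrix.of_apply, Sum.elim_inr, Sum.elim_inl, hW]
      conv_lhs => rw [hu_decomp]
      simp [Bfull_inl, Bfull_inr, Finset.sum_apply, Pi.smul_apply, smul_eq_mul]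
  -- det M is a unit
  have hdetM : M.det = 1 ∨ M.det = -1 := by
    have hunit : IsUnit M.det := by
      have key : M = (((Pi.basisFun ℤ (Fin r)).toMatrix (B.reindex ε)).submatrix ε ε).transpose := by
        ext p q
        simp [Module.Basis.toMatrix_apply, Matrix.submatrix_apply, hM, hB]
      rw [key, Matrix.det_transpose, Matrix.det_submatrix_equiv_self]
      exact IsUnit.of_mul_eq_one _ (by
        rw [← Matrix.det_mul,
          Module.Basis.toMatrix_mul_toMatrix_flip (Pi.basisFun ℤ (Fin r)) (B.reindex ε),
          Matrix.det_one])
    exact Int.isUnit_iff.mp hunit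
  have hdetC : C.det = s := by
    rw [hC, Matrix.det_fromBlocks_zero₁₂]
    simp [Matrix.det_unique]
  have hdetA : A.det = s * M.det := by rw [hACM, Matrix.det_mul, hdetC]
  -- orthogonality
  have horth : ∀ i : Fin (r-1), ∑ k, (b i : Fin r → ℤ) k * u k = 0 := by
    intro i
    have := (b i).2
    rwa [LinearMap.mem_ker, phi_apply] at this
  -- Gram block structure
  set G : Matrix (Fin (r-1)) (Fin (r-1)) ℤ :=
    Matrix.of fun i j => ∑ k, (b i : Fin r → ℤ) k * (b j : Fin r → ℤ) k with hG
  have hAAT : A * A.transpose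
      = Matrix.fromBlocks G 0 0 (Matrix.of fun _ _ => s) := by
    have hsum : ∀ p' q' : Fin (r-1) ⊕ Unit,
        (A * A.transpose) p' q' = ∑ k, W p' k * W q' k := by
      intro p' q'
      rw [Matrix.mul_apply]
      simp only [Matrix.transpose_apply, hA, Matrix.of_apply]
      exact Equiv.sum_comp ε (fun k => W p' k * W q' k)
    ext p q
    cases p with
    | inl i =>
      cases q with
      | inl j => rw [hsum]; simp [hW, Matrix.fromBlocks, hG]
      | inr t => rw [hsum]; simp [hW, Matrix.fromBlocks, horth i]
    | inr t =>
      cases q with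
      | inl j =>
        rw [hsum]; simp only [hW, Sum.elim_inr, Sum.elim_inl]
        simp only [Matrix.fromBlocks, Sum.elim_inr, Sum.elim_inl, Matrix.fromRows,
          Matrix.zero_apply]
        rw [Finset.sum_congr rfl (fun k _ => mul_comm (u k) _), horth j]
        rfl
      | inr t' => rw [hsum]; simp [hW, Matrix.fromBlocks, hsdef]
  have hdet2 : G.det * s = s * s := by
    have h1 : (A * A.transpose).det = G.det * s := by
      rw [hAAT, Matrix.det_fromBlocks_zero₁₂]
      simp [Matrix.det_unique]
    have h2 : (A * A.transpose).det = s * s := by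
      rw [Matrix.det_mul, Matrix.det_transpose, hdetA]
      rcases hdetM with h | h <;> rw [h] <;> ring
    rw [← h1, h2]
  exact mul_right_cancel₀ hs hdet2
end gram

lemma bezout {r : ℕ} (u : Fin r → ℤ) (hgcd : Finset.univ.gcd u = 1) :
    ∃ c : Fin r → ℤ, phi u c = 1 := by
  have hP : (Ideal.span (Set.range u)).IsPrincipal := IsPrincipalIdealRing.principal _
  obtain ⟨g, hg⟩ := hP
  have hgu : ∀ i, g ∣ u i := by
    intro i
    have : u i ∈ Ideal.span (Set.range u) := Ideal.subset_span ⟨i, rfl⟩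
    rw [hg] at this
    exact Ideal.mem_span_singleton.mp this
  have hg1 : IsUnit g := by
    have : g ∣ Finset.univ.gcd u := Finset.dvd_gcd (fun i _ => hgu i)
    rw [hgcd] at this
    exact isUnit_of_dvd_one this
  have htop : Ideal.span (Set.range u) = ⊤ := by
    rw [hg]
    exact Ideal.span_singleton_eq_top.mpr hg1
  have h1 : (1 : ℤ) ∈ Ideal.span (Set.range u) := htop ▸ Submodule.mem_top
  obtain ⟨c, hc⟩ := (Submodule.mem_span_range_iff_exists_fun ℤ).mp h1
  exact ⟨c, by rw [phi_apply]; simpa [smul_eq_mul] using hc⟩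

/-- Let `r ≥ 2` and `a₁, …, a_r ≥ 1` be integers, and let
`H = {z ∈ ℤ^r : ∑ i, a i * z i = 0}` (the kernel of the linear form `z ↦ ∑ i, z i • a i`).
Then `H` is a free `ℤ`-module of rank `r - 1`, and for every `ℤ`-basis `(f₁, …, f_{r-1})` of `H`,
the determinant of the Gram matrix `(⟨f i, f j⟩)` of Euclidean inner products in `ℝ^r` equals
`(∑ i, a i ^ 2) / gcd (a₁, …, a_r) ^ 2`; equivalently, the `(r-1)`-dimensional volume
`√(det Gram)` of the fundamental parallelotope equals `√(∑ i, a i ^ 2) / gcd (a₁, …, a_r)`. -/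
theorem stmt0 (r : ℕ) (hr : 2 ≤ r) (a : Fin r → ℤ) (ha : ∀ i, 1 ≤ a i) :
    Module.Free ℤ (LinearMap.ker (Fintype.linearCombination ℤ a)) ∧
    Module.finrank ℤ (LinearMap.ker (Fintype.linearCombination ℤ a)) = r - 1 ∧
    ∀ b : Module.Basis (Fin (r - 1)) ℤ (LinearMap.ker (Fintype.linearCombination ℤ a)),
      (Matrix.of fun i j : Fin (r - 1) =>
          ∑ k, (((b i : Fin r → ℤ) k : ℝ) * ((b j : Fin r → ℤ) k : ℝ))).det
        = (∑ i, (a i : ℝ) ^ 2) / ((Finset.univ.gcd a : ℤ) : ℝ) ^ 2 ∧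
      Real.sqrt
          (Matrix.of fun i j : Fin (r - 1) =>
            ∑ k, (((b i : Fin r → ℤ) k : ℝ) * ((b j : Fin r → ℤ) k : ℝ))).det
        = Real.sqrt (∑ i, (a i : ℝ) ^ 2) / ((Finset.univ.gcd a : ℤ) : ℝ) := by
  classical
  set d : ℤ := Finset.univ.gcd a with hd
  set a' : Fin r → ℤ := fun i => a i / d with ha'def
  have i0 : Fin r := ⟨0, by omega⟩
  have ha0 : a i0 ≠ 0 := by have := ha i0; omega
  have hdvd : ∀ i, d ∣ a i := fun i => Finset.gcd_dvd (Finset.mem_univ i)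
  have hdne : d ≠ 0 := by
    intro h
    exact ha0 ((Finset.gcd_eq_zero_iff.mp (hd ▸ h)) i0 (Finset.mem_univ i0))
  have hdnonneg : 0 ≤ d := by
    rw [hd, ← Finset.normalize_gcd, ← Int.abs_eq_normalize]
    exact abs_nonneg _
  have hdpos : 0 < d := lt_of_le_of_ne hdnonneg (Ne.symm hdne)
  have hmul : ∀ i, a i = d * a' i := fun i => (Int.mul_ediv_cancel' (hdvd i)).symm
  have ha'pos : ∀ i, 0 < a' i := by
    intro i
    exact Int.ediv_pos_of_pos_of_dvd (lt_of_lt_of_le one_pos (ha i)) hdnonneg (hdvd i)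
  have hgcd' : Finset.univ.gcd a' = 1 := by
    rw [ha'def, hd]
    exact Finset.gcd_div_eq_one (Finset.mem_univ i0) ha0
  -- kernels agree
  have hker : LinearMap.ker (phi a) = LinearMap.ker (phi a') := by
    ext z
    simp only [LinearMap.mem_ker, phi_apply]
    constructor
    · intro h
      have : d * ∑ i, z i * a' i = 0 := by
        rw [Finset.mul_sum]
        rw [← h]
        exact Finset.sum_congr rfl fun i _ => by rw [hmul i]; ring
      exact (mul_eq_zero.mp this).resolve_left hdne
    · intro h
      calc ∑ i, z i * a i = d * ∑ i, z i * a' i := by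
            rw [Finset.mul_sum]; exact Finset.sum_congr rfl fun i _ => by rw [hmul i]; ring
        _ = 0 := by rw [h, mul_zero]
  obtain ⟨c, hc⟩ := bezout a' hgcd'
  have hs'pos : 0 < ∑ i, a' i * a' i :=
    Finset.sum_pos (fun i _ => mul_pos (ha'pos i) (ha'pos i)) ⟨i0, Finset.mem_univ i0⟩
  refine ⟨inferInstance, ?_, ?_⟩
  · show Module.finrank ℤ (LinearMap.ker (phi a)) = r - 1
    rw [hker]
    exact finrank_ker a' c hc (by omega)
  · intro b
    set b' : Module.Basis (Fin (r-1)) ℤ (LinearMap.ker (phi a')) :=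
      b.map (LinearEquiv.ofEq _ _ hker) with hb'
    have hbb' : ∀ i, (b' i : Fin r → ℤ) = (b i : Fin r → ℤ) := by
      intro i; rw [hb', Module.Basis.map_apply]; rfl
    have hZ := gram_det a' c hc b' (ne_of_gt hs'pos)
    -- real Gram matrix is cast of integer one
    have hcast : (Matrix.of fun i j : Fin (r - 1) =>
          ∑ k, (((b i : Fin r → ℤ) k : ℝ) * ((b j : Fin r → ℤ) k : ℝ)))
        = (Matrix.of fun i j : Fin (r-1) =>
            ∑ k, (b' i : Fin r → ℤ) k * (b' j : Fin r → ℤ) k).map (Int.cast : ℤ → ℝ) := by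
      ext i j
      simp [Matrix.map_apply, hbb']
    have hdetR : (Matrix.of fun i j : Fin (r - 1) =>
          ∑ k, (((b i : Fin r → ℤ) k : ℝ) * ((b j : Fin r → ℤ) k : ℝ))).det
        = ((∑ i, a' i * a' i : ℤ) : ℝ) := by
      rw [hcast,
        show (Matrix.of fun i j : Fin (r-1) =>
            ∑ k, (b' i : Fin r → ℤ) k * (b' j : Fin r → ℤ) k).map (Int.cast : ℤ → ℝ)
          = (Int.castRingHom ℝ).mapMatrix (Matrix.of fun i j : Fin (r-1) =>
            ∑ k, (b' i : Fin r → ℤ) k * (b' j : Fin r → ℤ) k) from rfl,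
        ← RingHom.map_det, hZ]
      simp
    have hsum : (∑ i, (a i : ℝ) ^ 2) = (d:ℝ)^2 * ((∑ i, a' i * a' i : ℤ) : ℝ) := by
      push_cast
      rw [Finset.mul_sum]
      exact Finset.sum_congr rfl fun i _ => by rw [hmul i]; push_cast; ring
    have hdR : (d : ℝ) ≠ 0 := Int.cast_ne_zero.mpr hdne
    have hmain : (Matrix.of fun i j : Fin (r - 1) =>
          ∑ k, (((b i : Fin r → ℤ) k : ℝ) * ((b j : Fin r → ℤ) k : ℝ))).det
        = (∑ i, (a i : ℝ) ^ 2) / (d : ℝ) ^ 2 := by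
      rw [hdetR, hsum]
      field_simp
    refine ⟨hmain, ?_⟩
    have hSnn : (0:ℝ) ≤ ∑ i, (a i : ℝ) ^ 2 := Finset.sum_nonneg fun i _ => sq_nonneg _
    rw [hmain, Real.sqrt_div hSnn, Real.sqrt_sq (by positivity : (0:ℝ) ≤ (d:ℝ))]
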